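/- Let X be a nonempty finite set and let p, q : X → ℝ be nonnegative weight functions with p(x) + q(x) > 0 for every x ∈ X. Then among all discriminators D : X → ℝ with 0 < D(x) < 1 for all x, the objective J(D) = Σ_{x ∈ X} ( p(x)·log D(x) + q(x)·log(1 − D(x)) ) is maximized by D*(x) = p(x) / (p(x) + q(x)); that is, J(D) ≤ J(D*) for every such D. -/

import Mathlib

lemma pointwise_opt (p q d : ℝ) (hp : 0 ≤ p) (hq : 0 ≤ q) (hpq : 0 < p + q)
    (hd0 : 0 < d) (hd1 : d < 1) :
    p * Real.log d + q * Real.log (1 - d) ≤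
      p * Real.log (p / (p + q)) + q * Real.log (1 - p / (p + q)) := by
  have h1d : 0 < 1 - d := by linarith
  have hq' : (1 : ℝ) - p / (p + q) = q / (p + q) := by
    field_simp
    ring
  rw [hq']
  rcases eq_or_lt_of_le hp with hp0 | hp0
  · -- p = 0
    rw [← hp0]
    simp only [zero_mul, zero_add]
    have hqpos : 0 < q := by linarith
    rw [div_self (ne_of_gt hqpos), Real.log_one, mul_zero]
    have : Real.log (1 - d) ≤ 0 := Real.log_nonpos (by linarith) (by linarith)
    nlinarith
  rcases eq_or_lt_of_le hq with hq0 | hq0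
  · -- q = 0
    rw [← hq0]
    simp only [zero_mul, add_zero]
    rw [div_self (ne_of_gt hp0), Real.log_one, mul_zero]
    have : Real.log d ≤ 0 := Real.log_nonpos (le_of_lt hd0) (le_of_lt hd1)
    nlinarith
  · -- p, q > 0
    have h1 : Real.log d - Real.log (p / (p + q)) ≤ d * (p + q) / p - 1 := by
      have := Real.log_le_sub_one_of_pos (show 0 < d / (p / (p + q)) by positivity)
      rw [Real.log_div (ne_of_gt hd0) (by positivity)] at this
      have he : d / (p / (p + q)) = d * (p + q) / p := by field_simp
      linarith [he ▸ this]
    have h2 : Real.log (1 - d) - Real.log (q / (p + q)) ≤ (1 - d) * (p + q) / q - 1 := by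
      have := Real.log_le_sub_one_of_pos (show 0 < (1 - d) / (q / (p + q)) by positivity)
      rw [Real.log_div (ne_of_gt h1d) (by positivity)] at this
      have he : (1 - d) / (q / (p + q)) = (1 - d) * (p + q) / q := by field_simp
      linarith [he ▸ this]
    have h1' : p * (Real.log d - Real.log (p / (p + q))) ≤ d * (p + q) - p := by
      have := mul_le_mul_of_nonneg_left h1 (le_of_lt hp0)
      calc p * (Real.log d - Real.log (p / (p + q)))
          ≤ p * (d * (p + q) / p - 1) := this
        _ = d * (p + q) - p := by field_simp
    have h2' : q * (Real.log (1 - d) - Real.log (q / (p + q))) ≤ (1 - d) * (p + q) - q := by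
      have := mul_le_mul_of_nonneg_left h2 (le_of_lt hq0)
      calc q * (Real.log (1 - d) - Real.log (q / (p + q)))
          ≤ q * ((1 - d) * (p + q) / q - 1) := this
        _ = (1 - d) * (p + q) - q := by field_simp
    nlinarith [h1', h2']

/-- **Optimal discriminator in adversarial imitation learning.**
Let `X` be a nonempty finite set and `p, q : X → ℝ` nonnegative weight functions with
`p(x) + q(x) > 0` for all `x`.  Then among all discriminators `D : X → ℝ` with
`0 < D(x) < 1`, the objective `J(D) = Σₓ (p(x)·log D(x) + q(x)·log(1 - D(x)))` is maximized
by `D*(x) = p(x)/(p(x) + q(x))`, i.e. `J(D) ≤ J(D*)` for every such `D`. -/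
theorem optimal_discriminator
    {X : Type*} [Fintype X] [Nonempty X]
    (p q : X → ℝ)
    (hp : ∀ x, 0 ≤ p x) (hq : ∀ x, 0 ≤ q x)
    (hpq : ∀ x, 0 < p x + q x)
    (D : X → ℝ) (hD : ∀ x, 0 < D x ∧ D x < 1) :
    ∑ x, (p x * Real.log (D x) + q x * Real.log (1 - D x)) ≤
      ∑ x, (p x * Real.log (p x / (p x + q x)) +
        q x * Real.log (1 - p x / (p x + q x))) := by
  apply Finset.sum_le_sum
  intro x _
  exact pointwise_opt (p x) (q x) (D x) (hp x) (hq x) (hpq x) (hD x).1 (hD x).2
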